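/- Let A be a C*-algebra, let a, g be positive elements of A with 0 ≤ g ≤ 1, and let ε > 0. Then (a - ε)₊ is Cuntz subequivalent (in M₂(A)) to the direct sum [(1-g)a(1-g) - ε]₊ ⊕ g. -/

import Mathlib

open Filter Topology

/-- Cuntz subequivalence: `a ≾ b` iff some sequence `vₙ b vₙ*` converges to `a`. -/
def CuntzSubeq {R : Type*} [Mul R] [Star R] [TopologicalSpace R] (a b : R) : Prop :=
  ∃ v : ℕ → R, Tendsto (fun n => v n * b * star (v n)) atTop (𝓝 a)

/-- `(a - ε)₊`, via the continuous functional calculus applied to `t ↦ max (t - ε) 0`. -/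
noncomputable def cutoff {A : Type*} [NonUnitalRing A] [StarRing A] [Module ℝ A]
    [SMulCommClass ℝ A A] [IsScalarTower ℝ A A] [TopologicalSpace A]
    [NonUnitalContinuousFunctionalCalculus ℝ A (IsSelfAdjoint : A → Prop)]
    (ε : ℝ) (a : A) : A :=
  cfcₙ (fun t : ℝ => max (t - ε) 0) a

section CuntzAux

variable {A : Type*} [CStarAlgebra A] [PartialOrder A] [StarOrderedRing A]

private lemma approx_conj (p q : A) (hp : 0 ≤ p) (hpq : p ≤ q) {δ : ℝ} (hδ : 0 < δ) :
    ∃ v : A, ‖v * q * star v - p‖ ≤ δ := by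
  have hq : 0 ≤ q := hp.trans hpq
  have hqsa : IsSelfAdjoint q := .of_nonneg hq
  have hspec : ∀ t ∈ spectrum ℝ q, 0 ≤ t := fun t ht => spectrum_nonneg_of_nonneg hq ht
  set N : ℝ → ℝ := fun t => max t 0 + δ with hN
  have hNpos : ∀ t, 0 < N t := fun t => by simp only [hN]; positivity
  have hNt : ∀ t : ℝ, 0 ≤ t → N t = t + δ := fun t ht => by
    simp only [hN]; rw [max_eq_left ht]
  have hcontN : Continuous N := by simp only [hN]; fun_prop
  have hcont₁ : Continuous fun t => (Real.sqrt (N t))⁻¹ :=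
    (Real.continuous_sqrt.comp hcontN).inv₀ fun t => (Real.sqrt_pos.mpr (hNpos t)).ne'
  have hcont₂ : Continuous fun t => Real.sqrt (δ / N t) :=
    Real.continuous_sqrt.comp (continuous_const.div hcontN fun t => (hNpos t).ne')
  have hcdiv1 : Continuous fun t : ℝ => t / N t :=
    continuous_id.div hcontN fun t => (hNpos t).ne'
  have hcdiv2 : Continuous fun t : ℝ => δ / N t :=
    continuous_const.div hcontN fun t => (hNpos t).ne'
  set f₁ : ℝ → ℝ := fun t => (Real.sqrt (N t))⁻¹ with hf₁
  set f₂ : ℝ → ℝ := fun t => Real.sqrt (δ / N t) with hf₂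
  have hrqr : cfc f₁ q * (q * cfc f₁ q) = cfc (fun t => t / N t) q := by
    have e : cfc (fun t : ℝ => f₁ t * (t * f₁ t)) q = cfc f₁ q * (q * cfc f₁ q) := by
      rw [cfc_mul f₁ (fun t => t * f₁ t) q hcont₁.continuousOn ((continuous_id'.mul hcont₁).continuousOn),
        cfc_mul (fun t => t) f₁ q continuous_id'.continuousOn hcont₁.continuousOn, cfc_id' ℝ q]
    rw [← e]
    refine cfc_congr fun t ht => ?_
    have ht0 := hspec t ht
    have hNs : Real.sqrt (N t) * Real.sqrt (N t) = N t := Real.mul_self_sqrt (hNpos t).le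
    calc f₁ t * (t * f₁ t) = t * (Real.sqrt (N t) * Real.sqrt (N t))⁻¹ := by
          rw [hf₁, mul_inv]; ring
      _ = t / N t := by rw [hNs, div_eq_mul_inv]
  have hm : cfc f₂ q * cfc f₂ q = cfc (fun t => δ / N t) q := by
    rw [← cfc_mul _ _ q hcont₂.continuousOn hcont₂.continuousOn]
    exact cfc_congr fun t ht => Real.mul_self_sqrt (by positivity)
  have hone : cfc (fun t => t / N t) q + cfc (fun t => δ / N t) q = 1 := by
    rw [← cfc_add (a := q) _ _ hcdiv1.continuousOn hcdiv2.continuousOn, ← cfc_one (R := ℝ) q]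
    refine cfc_congr fun t ht => ?_
    rw [hNt t (hspec t ht)]
    have hne : t + δ ≠ 0 := by have := hspec t ht; positivity
    field_simp
    rfl
  set s : A := CFC.sqrt p with hs
  have hssa : IsSelfAdjoint s := .of_nonneg (CFC.sqrt_nonneg p)
  have hss : s * s = p := CFC.sqrt_mul_sqrt_self p hp
  have hrsa : IsSelfAdjoint (cfc f₁ q) := cfc_predicate f₁ q
  have hmsa : IsSelfAdjoint (cfc f₂ q) := cfc_predicate f₂ q
  refine ⟨s * cfc f₁ q, ?_⟩
  have hstar : star (s * cfc f₁ q) = cfc f₁ q * s := by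
    rw [star_mul, hrsa.star_eq, hssa.star_eq]
  have hv : s * cfc f₁ q * q * star (s * cfc f₁ q)
      = s * cfc (fun t => t / N t) q * s := by
    rw [hstar, ← hrqr]; noncomm_ring
  have hneg : s * cfc (fun t => t / N t) q * s - p
      = -(s * (cfc f₂ q * cfc f₂ q) * s) := by
    rw [hm, ← hss]
    have e : cfc (fun t => t / N t) q = 1 - cfc (fun t => δ / N t) q := by
      rw [← hone]; abel
    rw [e]; noncomm_ring
  rw [hv, hneg, norm_neg]
  have e1 : s * (cfc f₂ q * cfc f₂ q) * s = star (cfc f₂ q * s) * (cfc f₂ q * s) := by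
    rw [star_mul, hmsa.star_eq, hssa.star_eq]; noncomm_ring
  have e2 : (cfc f₂ q * s) * star (cfc f₂ q * s) = cfc f₂ q * p * cfc f₂ q := by
    rw [star_mul, hmsa.star_eq, hssa.star_eq, ← hss]; noncomm_ring
  have hnorm1 : ‖s * (cfc f₂ q * cfc f₂ q) * s‖ = ‖cfc f₂ q * p * cfc f₂ q‖ := by
    rw [e1, CStarRing.norm_star_mul_self, ← CStarRing.norm_self_mul_star, e2]
  rw [hnorm1]
  have hle : cfc f₂ q * p * cfc f₂ q ≤ cfc f₂ q * q * cfc f₂ q := by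
    have := star_left_conjugate_le_conjugate hpq (cfc f₂ q)
    rwa [hmsa.star_eq] at this
  have hnn : 0 ≤ cfc f₂ q * p * cfc f₂ q := by
    have := star_left_conjugate_nonneg hp (cfc f₂ q)
    rwa [hmsa.star_eq] at this
  refine (CStarAlgebra.norm_le_norm_of_nonneg_of_le hnn hle).trans ?_
  have hqq : cfc f₂ q * q * cfc f₂ q = cfc (fun t => f₂ t * (t * f₂ t)) q := by
    rw [cfc_mul f₂ (fun t => t * f₂ t) q hcont₂.continuousOn ((continuous_id'.mul hcont₂).continuousOn),
      cfc_mul (fun t => t) f₂ q continuous_id'.continuousOn hcont₂.continuousOn, cfc_id' ℝ q, mul_assoc]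
  rw [hqq]
  refine norm_cfc_le hδ.le fun t ht => ?_
  have ht0 := hspec t ht
  have h1 : f₂ t * f₂ t = δ / N t := Real.mul_self_sqrt (by positivity)
  have h2 : f₂ t * (t * f₂ t) = t * (δ / N t) := by rw [← h1]; ring
  rw [h2, hNt t ht0, Real.norm_eq_abs, abs_of_nonneg (by positivity)]
  calc t * (δ / (t + δ)) = (t * δ) / (t + δ) := by ring
    _ ≤ δ := by rw [div_le_iff₀ (by positivity)]; nlinarith

/-- `u* (uu* + γ)⁻¹ u = (u*u + γ)⁻¹ (u*u)`, in cfc form. -/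
private lemma conj_res (u : A) {γ : ℝ} (hγ : 0 < γ) :
    star u * cfc (fun t : ℝ => (max t 0 + γ)⁻¹) (u * star u) * u
      = cfc (fun t : ℝ => t / (max t 0 + γ)) (star u * u) := by
  set b := u * star u with hbdef
  set c := star u * u with hcdef
  have hb : 0 ≤ b := mul_star_self_nonneg u
  have hc : 0 ≤ c := star_mul_self_nonneg u
  have hbsa : IsSelfAdjoint b := .of_nonneg hb
  have hcsa : IsSelfAdjoint c := .of_nonneg hc
  have hbspec : ∀ t ∈ spectrum ℝ b, 0 ≤ t := fun t ht => spectrum_nonneg_of_nonneg hb ht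
  have hcspec : ∀ t ∈ spectrum ℝ c, 0 ≤ t := fun t ht => spectrum_nonneg_of_nonneg hc ht
  have hNpos : ∀ t : ℝ, 0 < max t 0 + γ := fun t => by positivity
  have hNne : ∀ t : ℝ, max t 0 + γ ≠ 0 := fun t => (hNpos t).ne'
  have hcontN : Continuous fun t : ℝ => max t 0 + γ := by fun_prop
  have hcinv : Continuous fun t : ℝ => (max t 0 + γ)⁻¹ := hcontN.inv₀ hNne
  have hcdiv : Continuous fun t : ℝ => t / (max t 0 + γ) := continuous_id.div hcontN hNne
  have hcadd : Continuous fun t : ℝ => t + γ := by fun_prop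
  have hplus : ∀ (x : A), IsSelfAdjoint x → x + algebraMap ℝ A γ = cfc (fun t : ℝ => t + γ) x := by
    intro x hx
    rw [cfc_add_const γ _ x continuous_id'.continuousOn hx, cfc_id' ℝ x hx]
  -- (b + γ) * jb = 1
  have h1 : (b + algebraMap ℝ A γ) * cfc (fun t : ℝ => (max t 0 + γ)⁻¹) b = 1 := by
    rw [hplus b hbsa, ← cfc_mul _ _ b hcadd.continuousOn hcinv.continuousOn,
      ← cfc_one (R := ℝ) b]
    refine cfc_congr fun t ht => ?_
    have ht0 := hbspec t ht
    rw [max_eq_left ht0]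
    field_simp
    rfl
  -- jc * (c + γ) = 1
  have h2 : cfc (fun t : ℝ => (max t 0 + γ)⁻¹) c * (c + algebraMap ℝ A γ) = 1 := by
    rw [hplus c hcsa, ← cfc_mul _ _ c hcinv.continuousOn hcadd.continuousOn,
      ← cfc_one (R := ℝ) c]
    refine cfc_congr fun t ht => ?_
    have ht0 := hcspec t ht
    rw [max_eq_left ht0]
    field_simp
    rfl
  -- (c+γ) * (u* jb u) = c
  have hcomm : (c + algebraMap ℝ A γ) * star u = star u * (b + algebraMap ℝ A γ) := by
    rw [add_mul, mul_add, hcdef, hbdef]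
    congr 1
    · rw [mul_assoc]
    · exact Algebra.commutes γ (star u)
  have h3 : (c + algebraMap ℝ A γ)
      * (star u * cfc (fun t : ℝ => (max t 0 + γ)⁻¹) b * u) = c := by
    calc (c + algebraMap ℝ A γ) * (star u * cfc (fun t : ℝ => (max t 0 + γ)⁻¹) b * u)
        = ((c + algebraMap ℝ A γ) * star u) * cfc (fun t : ℝ => (max t 0 + γ)⁻¹) b * u := by
          noncomm_ring
      _ = star u * ((b + algebraMap ℝ A γ) * cfc (fun t : ℝ => (max t 0 + γ)⁻¹) b) * u := by
          rw [hcomm]; noncomm_ring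
      _ = c := by rw [h1, mul_one]
  -- (c+γ) * cfc (t/(t+γ)) c = c
  have h4 : (c + algebraMap ℝ A γ) * cfc (fun t : ℝ => t / (max t 0 + γ)) c = c := by
    rw [hplus c hcsa, ← cfc_mul _ _ c hcadd.continuousOn hcdiv.continuousOn]
    conv_rhs => rw [← cfc_id' ℝ c hcsa]
    refine cfc_congr fun t ht => ?_
    have ht0 := hcspec t ht
    rw [max_eq_left ht0]
    field_simp
  -- cancel
  calc star u * cfc (fun t : ℝ => (max t 0 + γ)⁻¹) b * u
      = (cfc (fun t : ℝ => (max t 0 + γ)⁻¹) c * (c + algebraMap ℝ A γ))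
        * (star u * cfc (fun t : ℝ => (max t 0 + γ)⁻¹) b * u) := by rw [h2, one_mul]
    _ = cfc (fun t : ℝ => (max t 0 + γ)⁻¹) c * ((c + algebraMap ℝ A γ)
        * (star u * cfc (fun t : ℝ => (max t 0 + γ)⁻¹) b * u)) := by rw [mul_assoc]
    _ = cfc (fun t : ℝ => (max t 0 + γ)⁻¹) c * ((c + algebraMap ℝ A γ)
        * cfc (fun t : ℝ => t / (max t 0 + γ)) c) := by rw [h3, h4]
    _ = (cfc (fun t : ℝ => (max t 0 + γ)⁻¹) c * (c + algebraMap ℝ A γ))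
        * cfc (fun t : ℝ => t / (max t 0 + γ)) c := by rw [mul_assoc]
    _ = cfc (fun t : ℝ => t / (max t 0 + γ)) c := by rw [h2, one_mul]

/-- Conjugation of the resolvent-type function `(t-ε)/(t+γ)` through `u`. -/
private lemma conj_eta (u : A) {γ ε : ℝ} (hγ : 0 < γ) :
    star u * cfc (fun t : ℝ => (t - ε) / (max t 0 + γ)) (u * star u) * u
      = cfc (fun t : ℝ => t - (ε + γ) * (t / (max t 0 + γ))) (star u * u) := by
  set b := u * star u with hbdef
  set c := star u * u with hcdef
  have hb : 0 ≤ b := mul_star_self_nonneg u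
  have hc : 0 ≤ c := star_mul_self_nonneg u
  have hbsa : IsSelfAdjoint b := .of_nonneg hb
  have hcsa : IsSelfAdjoint c := .of_nonneg hc
  have hbspec : ∀ t ∈ spectrum ℝ b, 0 ≤ t := fun t ht => spectrum_nonneg_of_nonneg hb ht
  have hNpos : ∀ t : ℝ, 0 < max t 0 + γ := fun t => by positivity
  have hNne : ∀ t : ℝ, max t 0 + γ ≠ 0 := fun t => (hNpos t).ne'
  have hcontN : Continuous fun t : ℝ => max t 0 + γ := by fun_prop
  have hcinv : Continuous fun t : ℝ => (max t 0 + γ)⁻¹ := hcontN.inv₀ hNne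
  have hcdiv : Continuous fun t : ℝ => t / (max t 0 + γ) := continuous_id.div hcontN hNne
  have hsplit : cfc (fun t : ℝ => (t - ε) / (max t 0 + γ)) b
      = 1 - (ε + γ) • cfc (fun t : ℝ => (max t 0 + γ)⁻¹) b := by
    have e1 : cfc (fun t : ℝ => 1 - (ε + γ) * (max t 0 + γ)⁻¹) b
        = 1 - (ε + γ) • cfc (fun t : ℝ => (max t 0 + γ)⁻¹) b := by
      rw [cfc_sub (fun _ => (1:ℝ)) (fun t => (ε + γ) * (max t 0 + γ)⁻¹) b continuous_const.continuousOn
        ((continuous_const.mul hcinv).continuousOn),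
        cfc_const_mul _ _ b hcinv.continuousOn, cfc_const_one ℝ b]
    rw [← e1]
    refine cfc_congr fun t ht => ?_
    have ht0 := hbspec t ht
    rw [max_eq_left ht0]
    have hne : t + γ ≠ 0 := by positivity
    field_simp
    try ring
  rw [hsplit]
  have expand : star u * (1 - (ε + γ) • cfc (fun t : ℝ => (max t 0 + γ)⁻¹) b) * u
      = c - (ε + γ) • (star u * cfc (fun t : ℝ => (max t 0 + γ)⁻¹) b * u) := by
    rw [mul_sub, sub_mul, mul_one, mul_smul_comm, smul_mul_assoc, hcdef]
  rw [expand, conj_res u hγ]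
  have e2 : cfc (fun t : ℝ => t - (ε + γ) * (t / (max t 0 + γ))) c
      = c - (ε + γ) • cfc (fun t : ℝ => t / (max t 0 + γ)) c := by
    rw [cfc_sub (fun t => t) (fun t => (ε + γ) * (t / (max t 0 + γ))) c continuous_id'.continuousOn
      ((continuous_const.mul hcdiv).continuousOn),
      cfc_const_mul _ _ c hcdiv.continuousOn, cfc_id' ℝ c hcsa]
  rw [e2]

private lemma key (a g : A) (ha : 0 ≤ a) (hg₀ : 0 ≤ g) (hg₁ : g ≤ 1)
    {ε γ δ : ℝ} (hε : 0 < ε) (hγ : 0 < γ) (hδ : 0 < δ) :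
    ∃ x y : A,
      ‖x * cutoff ε ((1 - g) * a * (1 - g)) * star x + y * g * star y
          - cfc (fun t : ℝ => max (t - (ε + 2 * γ)) 0) a‖ ≤ δ := by
  have hasa : IsSelfAdjoint a := .of_nonneg ha
  have hgsa : IsSelfAdjoint g := .of_nonneg hg₀
  set sa := CFC.sqrt a with hsa_def
  have hsa2 : sa * sa = a := CFC.sqrt_mul_sqrt_self a ha
  have hsasa : IsSelfAdjoint sa := .of_nonneg (CFC.sqrt_nonneg a)
  have h1gsa : IsSelfAdjoint (1 - g) := (IsSelfAdjoint.one (R := A)).sub hgsa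
  set u := (1 - g) * sa with hu_def
  have hustar : star u = sa * (1 - g) := by
    rw [hu_def, star_mul, hsasa.star_eq, h1gsa.star_eq]
  have hb_eq : u * star u = (1 - g) * a * (1 - g) := by
    rw [hu_def, hustar, ← hsa2]; noncomm_ring
  have hc : 0 ≤ star u * u := star_mul_self_nonneg u
  have hcsa : IsSelfAdjoint (star u * u) := .of_nonneg hc
  have hc_eq : star u * u = sa * ((1 - g) * (1 - g)) * sa := by
    rw [hu_def, hustar]; noncomm_ring
  -- spectrum facts
  have hg2 : ∀ t ∈ spectrum ℝ g, t ≤ 1 := by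
    have h1 : g ≤ algebraMap ℝ A 1 := by rwa [map_one]
    exact (le_algebraMap_iff_spectrum_le (r := (1:ℝ)) (a := g) hgsa).mp h1
  -- the element k = v g v*
  have hw2cont : Continuous fun t : ℝ => Real.sqrt (2 - t) :=
    Real.continuous_sqrt.comp (by fun_prop)
  set w₂ := cfc (fun t : ℝ => Real.sqrt (2 - t)) g with hw2_def
  have hw2sa : IsSelfAdjoint w₂ := cfc_predicate _ g
  set v := sa * w₂ with hv_def
  have hk : v * g * star v = a - star u * u := by
    have e1 : cfc (fun t : ℝ => Real.sqrt (2 - t) * (t * Real.sqrt (2 - t))) g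
        = w₂ * (g * w₂) := by
      rw [cfc_mul (fun t : ℝ => Real.sqrt (2 - t)) (fun t => t * Real.sqrt (2 - t)) g hw2cont.continuousOn ((continuous_id'.mul hw2cont).continuousOn),
        cfc_mul _ _ g continuous_id'.continuousOn hw2cont.continuousOn, cfc_id' ℝ g hgsa]
    have e2 : cfc (fun t : ℝ => Real.sqrt (2 - t) * (t * Real.sqrt (2 - t))) g
        = cfc (fun t : ℝ => 2 * t - t * t) g := by
      refine cfc_congr fun t ht => ?_
      have h2t : (0:ℝ) ≤ 2 - t := by have := hg2 t ht; linarith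
      have hs := Real.mul_self_sqrt h2t
      calc Real.sqrt (2 - t) * (t * Real.sqrt (2 - t))
          = t * (Real.sqrt (2 - t) * Real.sqrt (2 - t)) := by ring
        _ = 2 * t - t * t := by rw [hs]; ring
    have e3 : cfc (fun t : ℝ => 2 * t - t * t) g = (2:ℝ) • g - g * g := by
      rw [cfc_sub _ _ g (by fun_prop) (by fun_prop),
        cfc_const_mul _ _ g continuous_id'.continuousOn,
        cfc_mul _ _ g continuous_id'.continuousOn continuous_id'.continuousOn,
        cfc_id' ℝ g hgsa]
    have e4 : w₂ * (g * w₂) = (2:ℝ) • g - g * g := by rw [← e1, e2, e3]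
    have hvstar : star v = w₂ * sa := by rw [hv_def, star_mul, hw2sa.star_eq, hsasa.star_eq]
    have e5 : v * g * star v = sa * (w₂ * (g * w₂)) * sa := by
      rw [hv_def, hvstar]; noncomm_ring
    rw [e5, e4, hc_eq, ← hsa2, two_smul]; noncomm_ring
  -- B
  have hbpos : 0 ≤ u * star u := mul_star_self_nonneg u
  have hbsa : IsSelfAdjoint (u * star u) := .of_nonneg hbpos
  have hbspec : ∀ t ∈ spectrum ℝ (u * star u), 0 ≤ t :=
    fun t ht => spectrum_nonneg_of_nonneg hbpos ht
  have hcutcont : Continuous fun t : ℝ => max (t - ε) 0 := by fun_prop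
  have hBrw : cutoff ε ((1 - g) * a * (1 - g))
      = cfc (fun t : ℝ => max (t - ε) 0) (u * star u) := by
    rw [← hb_eq]
    exact cfcₙ_eq_cfc hcutcont.continuousOn (by rw [zero_sub]; exact max_eq_right (by linarith))
  have hBpos : 0 ≤ cfc (fun t : ℝ => max (t - ε) 0) (u * star u) :=
    cfc_nonneg fun t ht => le_max_right _ _
  -- ρ and the inequality η(b) ≤ ρ B ρ
  have hNpos : ∀ t : ℝ, 0 < max t 0 + γ := fun t => by positivity
  have hNne : ∀ t : ℝ, max t 0 + γ ≠ 0 := fun t => (hNpos t).ne'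
  have hcontN : Continuous fun t : ℝ => max t 0 + γ := by fun_prop
  have hρcont : Continuous fun t : ℝ => (Real.sqrt (max t ε + γ))⁻¹ :=
    (Real.continuous_sqrt.comp (by fun_prop)).inv₀ fun t =>
      (Real.sqrt_pos.mpr (by positivity)).ne'
  have hρsa : IsSelfAdjoint (cfc (fun t : ℝ => (Real.sqrt (max t ε + γ))⁻¹) (u * star u)) :=
    cfc_predicate _ _
  have hηcont : Continuous fun t : ℝ => (t - ε) / (max t 0 + γ) :=
    (continuous_id.sub continuous_const).div hcontN hNne
  have hstep : cfc (fun t : ℝ => (t - ε) / (max t 0 + γ)) (u * star u)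
      ≤ cfc (fun t : ℝ => (Real.sqrt (max t ε + γ))⁻¹) (u * star u)
        * cfc (fun t : ℝ => max (t - ε) 0) (u * star u)
        * cfc (fun t : ℝ => (Real.sqrt (max t ε + γ))⁻¹) (u * star u) := by
    have e : cfc (fun t : ℝ => (Real.sqrt (max t ε + γ))⁻¹
          * (max (t - ε) 0 * (Real.sqrt (max t ε + γ))⁻¹)) (u * star u)
        = cfc (fun t : ℝ => (Real.sqrt (max t ε + γ))⁻¹) (u * star u)
          * cfc (fun t : ℝ => max (t - ε) 0) (u * star u)
          * cfc (fun t : ℝ => (Real.sqrt (max t ε + γ))⁻¹) (u * star u) := by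
      rw [cfc_mul (fun t : ℝ => (Real.sqrt (max t ε + γ))⁻¹) (fun t => max (t - ε) 0 * (Real.sqrt (max t ε + γ))⁻¹) _ hρcont.continuousOn ((hcutcont.mul hρcont).continuousOn),
        cfc_mul _ _ _ hcutcont.continuousOn hρcont.continuousOn]
      noncomm_ring
    rw [← e]
    refine cfc_mono (fun t ht => ?_) hηcont.continuousOn ?_
    · have ht0 := hbspec t ht
      rcases le_or_gt ε t with hle | hlt
      · have hmax1 : max t ε = t := max_eq_left hle
        have hmax2 : max t 0 = t := max_eq_left ht0
        have hmax3 : max (t - ε) 0 = t - ε := max_eq_left (by linarith)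
        have hs : Real.sqrt (t + γ) * Real.sqrt (t + γ) = t + γ :=
          Real.mul_self_sqrt (by positivity)
        rw [hmax1, hmax2, hmax3]
        calc (t - ε) / (t + γ)
            = (t - ε) * (Real.sqrt (t + γ) * Real.sqrt (t + γ))⁻¹ := by
              rw [hs, div_eq_mul_inv]
          _ ≤ (Real.sqrt (t + γ))⁻¹ * ((t - ε) * (Real.sqrt (t + γ))⁻¹) := by
              rw [mul_inv]; exact le_of_eq (by ring)
      · have hmax3 : max (t - ε) 0 = 0 := max_eq_right (by linarith)
        rw [hmax3]
        have h0 : (t - ε) / (max t 0 + γ) ≤ 0 :=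
          div_nonpos_iff.mpr (Or.inr ⟨by linarith, (hNpos t).le⟩)
        simpa using h0
    · exact (hρcont.mul (hcutcont.mul hρcont)).continuousOn
  -- main inequality on c
  have hcspec : ∀ t ∈ spectrum ℝ (star u * u), 0 ≤ t :=
    fun t ht => spectrum_nonneg_of_nonneg hc ht
  have hdivcont : Continuous fun t : ℝ => t / (max t 0 + γ) := continuous_id.div hcontN hNne
  have hmono : star u * u - algebraMap ℝ A (ε + γ)
      ≤ cfc (fun t : ℝ => t - (ε + γ) * (t / (max t 0 + γ))) (star u * u) := by
    have lhs_eq : star u * u - algebraMap ℝ A (ε + γ)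
        = cfc (fun t : ℝ => t - (ε + γ)) (star u * u) := by
      rw [cfc_sub _ _ _ continuous_id'.continuousOn continuous_const.continuousOn,
        cfc_id' ℝ _ hcsa, cfc_const (ε + γ) _ hcsa]
    rw [lhs_eq]
    refine cfc_mono (fun t ht => ?_) (by fun_prop)
      ((continuous_id.sub (continuous_const.mul hdivcont)).continuousOn)
    have ht0 := hcspec t ht
    have hd : t / (max t 0 + γ) ≤ 1 := by
      rw [max_eq_left ht0, div_le_one (by positivity)]; linarith
    have hd0 : 0 ≤ t / (max t 0 + γ) := div_nonneg ht0 (hNpos t).le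
    nlinarith [hd, hd0]
  have hconj := conj_eta u (γ := γ) (ε := ε) hγ
  have hEq2 := star_left_conjugate_le_conjugate hstep u
  have h5 : star u * u - algebraMap ℝ A (ε + γ)
      ≤ (star u * cfc (fun t : ℝ => (Real.sqrt (max t ε + γ))⁻¹) (u * star u))
        * cfc (fun t : ℝ => max (t - ε) 0) (u * star u)
        * star (star u * cfc (fun t : ℝ => (Real.sqrt (max t ε + γ))⁻¹) (u * star u)) := by
    have hws : star (star u * cfc (fun t : ℝ => (Real.sqrt (max t ε + γ))⁻¹) (u * star u))
        = cfc (fun t : ℝ => (Real.sqrt (max t ε + γ))⁻¹) (u * star u) * u := by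
      rw [star_mul, hρsa.star_eq, star_star]
    rw [hws]
    calc star u * u - algebraMap ℝ A (ε + γ)
        ≤ cfc (fun t : ℝ => t - (ε + γ) * (t / (max t 0 + γ))) (star u * u) := hmono
      _ = star u * cfc (fun t : ℝ => (t - ε) / (max t 0 + γ)) (u * star u) * u := hconj.symm
      _ ≤ star u * (cfc (fun t : ℝ => (Real.sqrt (max t ε + γ))⁻¹) (u * star u)
            * cfc (fun t : ℝ => max (t - ε) 0) (u * star u)
            * cfc (fun t : ℝ => (Real.sqrt (max t ε + γ))⁻¹) (u * star u)) * u := hEq2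
      _ = (star u * cfc (fun t : ℝ => (Real.sqrt (max t ε + γ))⁻¹) (u * star u))
            * cfc (fun t : ℝ => max (t - ε) 0) (u * star u)
            * (cfc (fun t : ℝ => (Real.sqrt (max t ε + γ))⁻¹) (u * star u) * u) := by
          noncomm_ring
  set w := star u * cfc (fun t : ℝ => (Real.sqrt (max t ε + γ))⁻¹) (u * star u) with hw_def
  set B := cfc (fun t : ℝ => max (t - ε) 0) (u * star u) with hB_def
  have hY : a - algebraMap ℝ A (ε + γ) ≤ w * B * star w + v * g * star v := by
    have e : a - algebraMap ℝ A (ε + γ)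
        = (star u * u - algebraMap ℝ A (ε + γ)) + (v * g * star v) := by
      rw [hk]; abel
    rw [e]
    exact add_le_add_left h5 _
  -- the peeling function e
  have hfe_cont : Continuous fun t : ℝ =>
      Real.sqrt (max (t - (ε + 2 * γ)) 0 / max (t - (ε + γ)) γ) := by
    refine Real.continuous_sqrt.comp ?_
    exact (by fun_prop : Continuous fun t : ℝ => max (t - (ε + 2 * γ)) 0).div (by fun_prop)
      fun t => (lt_of_lt_of_le hγ (le_max_right _ _)).ne'
  set fe : ℝ → ℝ := fun t => Real.sqrt (max (t - (ε + 2 * γ)) 0 / max (t - (ε + γ)) γ)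
    with hfe_def
  set e := cfc fe a with he_def
  have hesa : IsSelfAdjoint e := cfc_predicate _ a
  set p := cfc (fun t : ℝ => max (t - (ε + 2 * γ)) 0) a with hp_def
  have hp_eq : e * (a - algebraMap ℝ A (ε + γ)) * e = p := by
    have m1 : a - algebraMap ℝ A (ε + γ) = cfc (fun t : ℝ => t - (ε + γ)) a := by
      rw [cfc_sub _ _ _ continuous_id'.continuousOn continuous_const.continuousOn,
        cfc_id' ℝ _ hasa, cfc_const (ε + γ) _ hasa]
    have m2 : cfc (fun t : ℝ => fe t * ((t - (ε + γ)) * fe t)) a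
        = e * (cfc (fun t : ℝ => t - (ε + γ)) a * e) := by
      rw [cfc_mul fe (fun t => (t - (ε + γ)) * fe t) _ hfe_cont.continuousOn
          (((continuous_id'.sub continuous_const).mul hfe_cont).continuousOn),
        cfc_mul (fun t => t - (ε + γ)) fe _ (continuous_id'.sub continuous_const).continuousOn hfe_cont.continuousOn]
    have m3 : cfc (fun t : ℝ => fe t * ((t - (ε + γ)) * fe t)) a = p := by
      refine cfc_congr fun t _ => ?_
      have hden : (0:ℝ) < max (t - (ε + γ)) γ := lt_of_lt_of_le hγ (le_max_right _ _)
      have hss : fe t * fe t = max (t - (ε + 2 * γ)) 0 / max (t - (ε + γ)) γ := by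
        rw [hfe_def]
        exact Real.mul_self_sqrt (div_nonneg (le_max_right _ _) hden.le)
      have expand : fe t * ((t - (ε + γ)) * fe t) = (t - (ε + γ)) * (fe t * fe t) := by ring
      rw [expand, hss]
      rcases le_or_gt (ε + 2 * γ) t with hle | hlt
      · have h1 : max (t - (ε + 2 * γ)) 0 = t - (ε + 2 * γ) := max_eq_left (by linarith)
        have h2 : max (t - (ε + γ)) γ = t - (ε + γ) := max_eq_left (by linarith)
        rw [h1, h2]
        have hne : t - (ε + γ) ≠ 0 := by linarith
        field_simp
      · have h1 : max (t - (ε + 2 * γ)) 0 = 0 := max_eq_right (by linarith)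
        rw [h1]
        simp
    rw [m1, mul_assoc, ← m2, m3]
  have hpnn : 0 ≤ p := cfc_nonneg fun t _ => le_max_right _ _
  have hpq : p ≤ e * (w * B * star w + v * g * star v) * e := by
    rw [← hp_eq]
    have h6 := star_left_conjugate_le_conjugate hY (star e)
    rwa [star_star, hesa.star_eq] at h6
  obtain ⟨v₀, hv₀⟩ := approx_conj p (e * (w * B * star w + v * g * star v) * e) hpnn hpq hδ
  refine ⟨v₀ * (e * w), v₀ * (e * v), ?_⟩
  rw [hBrw]
  have hvsa : star (v₀ * (e * w)) = star w * e * star v₀ := by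
    rw [star_mul, star_mul, hesa.star_eq]
  have hvsb : star (v₀ * (e * v)) = star v * e * star v₀ := by
    rw [star_mul, star_mul, hesa.star_eq]
  have hfin : v₀ * (e * w) * B * star (v₀ * (e * w))
        + v₀ * (e * v) * g * star (v₀ * (e * v))
      = v₀ * (e * (w * B * star w + v * g * star v) * e) * star v₀ := by
    rw [hvsa, hvsb]; noncomm_ring
  rw [hfin]
  exact hv₀

end CuntzAux

/-- `(a - ε)₊ ⊕ 0 ≾ [(1-g)a(1-g) - ε]₊ ⊕ g` in `M₂(A)`, for `a ≥ 0`, `0 ≤ g ≤ 1`. -/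
theorem cutoff_cuntzSubeq_corner_oplus {A : Type*} [CStarAlgebra A] [PartialOrder A]
    [StarOrderedRing A] (a g : A) (ha : 0 ≤ a) (hg₀ : 0 ≤ g) (hg₁ : g ≤ 1)
    (ε : ℝ) (hε : 0 < ε) :
    CuntzSubeq (Matrix.diagonal ![cutoff ε a, 0])
      (Matrix.diagonal ![cutoff ε ((1 - g) * a * (1 - g)), g]) := by
  have hasa : IsSelfAdjoint a := .of_nonneg ha
  have hcut : cutoff ε a = cfc (fun t : ℝ => max (t - ε) 0) a :=
    cfcₙ_eq_cfc (by fun_prop : Continuous fun t : ℝ => max (t - ε) 0).continuousOn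
      (by rw [zero_sub]; exact max_eq_right (by linarith))
  have hseq : ∀ n : ℕ, ∃ x y : A,
      ‖x * cutoff ε ((1 - g) * a * (1 - g)) * star x + y * g * star y
        - cutoff ε a‖ ≤ 3 * (1 / ((n : ℝ) + 1)) := by
    intro n
    have hγ : (0:ℝ) < 1 / ((n : ℝ) + 1) := by positivity
    obtain ⟨x, y, hxy⟩ := key a g ha hg₀ hg₁ (γ := 1 / ((n : ℝ) + 1))
      (δ := 1 / ((n : ℝ) + 1)) hε hγ hγ
    refine ⟨x, y, ?_⟩
    have hdiff : ‖cfc (fun t : ℝ => max (t - (ε + 2 * (1 / ((n : ℝ) + 1)))) 0) a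
        - cutoff ε a‖ ≤ 2 * (1 / ((n : ℝ) + 1)) := by
      rw [hcut, ← cfc_sub _ _ a (by fun_prop) (by fun_prop)]
      refine norm_cfc_le (by positivity) fun t ht => ?_
      rw [Real.norm_eq_abs]
      have hA1 : max (t - (ε + 2 * (1 / ((n : ℝ) + 1)))) 0 ≤ max (t - ε) 0 :=
        max_le_max (by linarith) le_rfl
      have hA2 : max (t - ε) 0
          ≤ max (t - (ε + 2 * (1 / ((n : ℝ) + 1)))) 0 + 2 * (1 / ((n : ℝ) + 1)) := by
        refine max_le (by linarith [le_max_left (t - (ε + 2 * (1 / ((n : ℝ) + 1)))) (0:ℝ)]) ?_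
        have := le_max_right (t - (ε + 2 * (1 / ((n : ℝ) + 1)))) (0:ℝ)
        linarith
      rw [abs_le]
      constructor <;> linarith
    have tri : x * cutoff ε ((1 - g) * a * (1 - g)) * star x + y * g * star y - cutoff ε a
        = (x * cutoff ε ((1 - g) * a * (1 - g)) * star x + y * g * star y
            - cfc (fun t : ℝ => max (t - (ε + 2 * (1 / ((n : ℝ) + 1)))) 0) a)
          + (cfc (fun t : ℝ => max (t - (ε + 2 * (1 / ((n : ℝ) + 1)))) 0) a
            - cutoff ε a) := by abel
    calc ‖x * cutoff ε ((1 - g) * a * (1 - g)) * star x + y * g * star y - cutoff ε a‖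
        ≤ ‖x * cutoff ε ((1 - g) * a * (1 - g)) * star x + y * g * star y
            - cfc (fun t : ℝ => max (t - (ε + 2 * (1 / ((n : ℝ) + 1)))) 0) a‖
          + ‖cfc (fun t : ℝ => max (t - (ε + 2 * (1 / ((n : ℝ) + 1)))) 0) a - cutoff ε a‖ := by
          rw [tri]; exact norm_add_le _ _
      _ ≤ 1 / ((n : ℝ) + 1) + 2 * (1 / ((n : ℝ) + 1)) := add_le_add hxy hdiff
      _ = 3 * (1 / ((n : ℝ) + 1)) := by ring
  choose x y hxy using hseq
  have hlim : Tendsto (fun n => x n * cutoff ε ((1 - g) * a * (1 - g)) * star (x n)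
      + y n * g * star (y n)) atTop (𝓝 (cutoff ε a)) := by
    rw [← tendsto_sub_nhds_zero_iff]
    refine squeeze_zero_norm (fun n => hxy n) ?_
    simpa using tendsto_one_div_add_atTop_nhds_zero_nat.const_mul (3:ℝ)
  refine ⟨fun n => Matrix.of ![![x n, y n], ![0, 0]], ?_⟩
  have hmat : ∀ n, (Matrix.of ![![x n, y n], ![0, 0]])
        * (Matrix.diagonal ![cutoff ε ((1 - g) * a * (1 - g)), g])
        * star (Matrix.of ![![x n, y n], ![0, 0]])
      = Matrix.of ![![x n * cutoff ε ((1 - g) * a * (1 - g)) * star (x n)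
          + y n * g * star (y n), 0], ![0, 0]] := by
    intro n
    have hdiag : Matrix.diagonal ![cutoff ε ((1 - g) * a * (1 - g)), g]
        = Matrix.of ![![cutoff ε ((1 - g) * a * (1 - g)), 0], ![0, g]] := by
      ext i j
      fin_cases i <;> fin_cases j <;> simp [Matrix.diagonal]
    rw [hdiag]
    ext i j
    rw [Matrix.star_eq_conjTranspose]
    fin_cases i <;> fin_cases j <;>
      simp [Matrix.mul_apply, Fin.sum_univ_two, Matrix.conjTranspose_apply,
        mul_add, add_mul, mul_assoc]
  have hL : Matrix.diagonal ![cutoff ε a, 0]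
      = Matrix.of ![![cutoff ε a, 0], ![0, 0]] := by
    ext i j
    fin_cases i <;> fin_cases j <;> simp [Matrix.diagonal]
  rw [hL]
  simp only [hmat]
  have hF : Continuous (fun z : A => Matrix.of ![![z, 0], ![0, 0]]) := by
    apply continuous_pi
    intro i
    apply continuous_pi
    intro j
    fin_cases i <;> fin_cases j <;> simp <;> fun_prop
  exact (hF.tendsto _).comp hlim
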